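/- Let Q ⊂ ℝ^d be a nonempty compact convex set with diameter D, let f : ℝ^d → ℝ be convex with L-Lipschitz gradient on Q, let δ ≥ 0, and for each k let g_δ(x_k) be a δ-oracle gradient at x_k. Consider the Frank–Wolfe iterates x_{k+1} = x_k + ᾱ_k (x̃_k − x_k), x̃_k ∈ argmin_{x ∈ Q} ⟨g_δ(x_k), x − x_k⟩, with step sizes ᾱ_k ∈ [0,1) satisfying Σ_{k=0}^∞ ᾱ_k = ∞ and Σ_{k=0}^∞ ᾱ_k² < ∞. Then limsup_{k→∞} (f(x_k) − f*) ≤ 2δ, where f* = min_{x ∈ Q} f(x). -/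

import Mathlib

open RealInnerProductSpace

variable {E : Type*} [NormedAddCommGroup E] [InnerProductSpace ℝ E] [CompleteSpace E]

/-- gradient inequality for convex functions -/
lemma fw_grad_convex_le {Q : Set E} {f : E → ℝ} (hconv : ConvexOn ℝ Q f)
    {x y : E} (hx : x ∈ Q) (hy : y ∈ Q) (hd : DifferentiableAt ℝ f x) :
    ⟪gradient f x, y - x⟫ ≤ f y - f x := by
  set v := y - x with hv
  have hder : HasDerivAt (fun t : ℝ => f (x + t • v)) ⟪gradient f x, v⟫ 0 := by
    have hgr := hd.hasGradientAt
    have hc : HasDerivAt (fun t : ℝ => x + t • v) v 0 := by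
      simpa using ((hasDerivAt_id (0:ℝ)).smul_const v).const_add x
    have := (by simpa using hgr.hasFDerivAt : HasFDerivAt f ((InnerProductSpace.toDual ℝ E) (gradient f x)) (x + (0:ℝ) • v)).comp_hasDerivAt 0 hc
    simpa [InnerProductSpace.toDual_apply_apply, Function.comp_def] using this
  have hslope : Filter.Tendsto (slope (fun t : ℝ => f (x + t • v)) 0)
      (nhdsWithin 0 (Set.Ioi (0:ℝ))) (nhds ⟪gradient f x, v⟫) := by
    have := (hasDerivWithinAt_iff_tendsto_slope' (f := fun t : ℝ => f (x + t • v))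
      (s := Set.Ioi (0:ℝ)) (x := 0) (f' := ⟪gradient f x, v⟫)
      (Set.notMem_Ioi.2 le_rfl)).1 (hder.hasDerivWithinAt)
    exact this
  have hbound : ∀ᶠ t in nhdsWithin 0 (Set.Ioi (0:ℝ)),
      slope (fun t : ℝ => f (x + t • v)) 0 t ≤ f y - f x := by
    filter_upwards [Ioc_mem_nhdsGT_of_mem (Set.mem_Ico.2 ⟨le_rfl, zero_lt_one⟩)] with t ht
    have ht0 : (0:ℝ) < t := ht.1
    have ht1 : t ≤ 1 := ht.2
    have hcomb : f ((1 - t) • x + t • y) ≤ (1 - t) * f x + t * f y :=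
      hconv.2 hx hy (by linarith) (le_of_lt ht0) (by ring)
    have hpt : (1 - t) • x + t • y = x + t • v := by
      rw [hv, sub_smul, one_smul, smul_sub]; abel
    rw [hpt] at hcomb
    rw [slope_def_field]
    have : f (x + t • v) - f (x + (0:ℝ) • v) ≤ t * (f y - f x) := by
      simp only [zero_smul, add_zero]
      nlinarith
    rw [sub_zero, div_le_iff₀ ht0]
    nlinarith
  exact le_of_tendsto hslope hbound

/-- descent lemma for L-Lipschitz gradient along a segment inside Q -/
lemma fw_descent {Q : Set E} {f : E → ℝ} {L : ℝ} (hQconv : Convex ℝ Q)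
    (hdiff : ∀ z ∈ Q, DifferentiableAt ℝ f z)
    (hLip : ∀ z ∈ Q, ∀ w ∈ Q, ‖gradient f z - gradient f w‖ ≤ L * ‖z - w‖)
    {x y : E} (hx : x ∈ Q) (hy : y ∈ Q) :
    f y ≤ f x + ⟪gradient f x, y - x⟫ + L / 2 * ‖y - x‖ ^ 2 := by
  set v := y - x with hv
  have hmem : ∀ t : ℝ, t ∈ Set.Icc (0:ℝ) 1 → x + t • v ∈ Q := fun t ht =>
    hQconv.add_smul_sub_mem hx hy ht
  set ψ : ℝ → ℝ := fun t => f (x + t • v) - t * ⟪gradient f x, v⟫ - L / 2 * t ^ 2 * ‖v‖ ^ 2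
    with hψ
  have hderiv : ∀ t ∈ Set.Icc (0:ℝ) 1, HasDerivAt ψ
      (⟪gradient f (x + t • v), v⟫ - ⟪gradient f x, v⟫ - L * t * ‖v‖ ^ 2) t := by
    intro t ht
    have hd := hdiff _ (hmem t ht)
    have hc : HasDerivAt (fun s : ℝ => x + s • v) v t := by
      simpa using ((hasDerivAt_id t).smul_const v).const_add x
    have h1 : HasDerivAt (fun s : ℝ => f (x + s • v)) ⟪gradient f (x + t • v), v⟫ t := by
      have := (by simpa using hd.hasGradientAt.hasFDerivAt :
        HasFDerivAt f ((InnerProductSpace.toDual ℝ E) (gradient f (x + t • v))) (x + t • v))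
        |>.comp_hasDerivAt t hc
      simpa [InnerProductSpace.toDual_apply_apply, Function.comp_def] using this
    have h2 : HasDerivAt (fun s : ℝ => s * ⟪gradient f x, v⟫) ⟪gradient f x, v⟫ t := by
      simpa using (hasDerivAt_id t).mul_const (⟪gradient f x, v⟫)
    have h3 : HasDerivAt (fun s : ℝ => L / 2 * s ^ 2 * ‖v‖ ^ 2) (L * t * ‖v‖ ^ 2) t := by
      have := ((hasDerivAt_pow 2 t).const_mul (L / 2)).mul_const (‖v‖ ^ 2)
      refine this.congr_deriv ?_
      rw [show (2:ℕ) - 1 = 1 from rfl]; push_cast; ring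
    exact (h1.sub h2).sub h3
  have hanti : AntitoneOn ψ (Set.Icc (0:ℝ) 1) := by
    apply antitoneOn_of_deriv_nonpos (convex_Icc 0 1)
    · intro t ht
      exact ((hderiv t ht).continuousAt).continuousWithinAt
    · intro t ht
      rw [interior_Icc] at ht
      exact ((hderiv t (Set.mem_Icc_of_Ioo ht)).differentiableAt).differentiableWithinAt
    · intro t ht
      rw [interior_Icc] at ht
      rw [(hderiv t (Set.mem_Icc_of_Ioo ht)).deriv]
      have hlip' : ‖gradient f (x + t • v) - gradient f x‖ ≤ L * (t * ‖v‖) := by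
        have := hLip _ (hmem t (Set.mem_Icc_of_Ioo ht)) x hx
        simpa [norm_smul, abs_of_pos ht.1] using this
      have hcs : ⟪gradient f (x + t • v) - gradient f x, v⟫ ≤
          ‖gradient f (x + t • v) - gradient f x‖ * ‖v‖ :=
        real_inner_le_norm _ _
      rw [inner_sub_left] at hcs
      have hn : (0:ℝ) ≤ ‖v‖ := norm_nonneg _
      nlinarith
  have := hanti (Set.mem_Icc.2 ⟨le_rfl, zero_le_one⟩) (Set.mem_Icc.2 ⟨zero_le_one, le_rfl⟩)
    zero_le_one
  simp only [hψ, zero_smul, add_zero, zero_mul, one_smul, one_pow, mul_one] at this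
  have hxy : x + v = y := by rw [hv]; abel
  rw [hxy] at this
  nlinarith [this]


lemma fw_seq_small (u α β : ℕ → ℝ) (B : ℝ)
    (hαmem : ∀ k, α k ∈ Set.Ico (0:ℝ) 1)
    (hβ : ∀ k, 0 ≤ β k) (hβs : Summable β)
    (hαdiv : ¬ Summable α)
    (hlb : ∀ k, -B ≤ u k)
    (hrec : ∀ k, u (k+1) ≤ (1 - α k) * u k + β k) :
    ∀ ε > 0, ∃ K, ∀ m ≥ K, u m ≤ ε := by
  intro ε hε
  set s : ℕ → ℝ := fun n => ∑ k ∈ Finset.range n, β k with hs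
  set S := ∑' k, β k with hS
  have hsle : ∀ n, s n ≤ S := fun n => Summable.sum_le_tsum _ (fun i _ => hβ i) hβs
  have hsmono : Monotone s := fun a b hab =>
    Finset.sum_le_sum_of_subset_of_nonneg (Finset.range_subset_range.2 hab) (fun i _ _ => hβ i)
  have htend : Filter.Tendsto s Filter.atTop (nhds S) := hβs.hasSum.tendsto_sum_nat
  obtain ⟨N, hN⟩ : ∃ N, S - ε / 2 < s N := by
    exact (htend.eventually (eventually_gt_nhds (by linarith))).exists
  have htail : ∀ n m, N ≤ n → n ≤ m → ∑ k ∈ Finset.Ico n m, β k < ε / 2 := by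
    intro n m hNn hnm
    rw [Finset.sum_Ico_eq_sub _ hnm]
    have h1 : s m ≤ S := hsle m
    have h2 : s N ≤ s n := hsmono hNn
    simp only [hs] at *
    linarith
  -- partial sums of α
  set A : ℕ → ℝ := fun n => ∑ k ∈ Finset.range n, α k with hA
  have hAdiv : Filter.Tendsto A Filter.atTop Filter.atTop :=
    (not_summable_iff_tendsto_nat_atTop_of_nonneg (fun k => (hαmem k).1)).1 hαdiv
  -- Step A : there is K ≥ N with u K ≤ ε/2
  obtain ⟨K, hKN, hKu⟩ : ∃ K, N ≤ K ∧ u K ≤ ε / 2 := by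
    by_contra hcon
    push_neg at hcon
    have hbig : ∀ k, N ≤ k → ε / 2 < u k := fun k hk => (hcon k hk)
    have key : ∀ m, N ≤ m → u m ≤ u N - ε / 2 * (A m - A N) + (s m - s N) := by
      intro m hm
      induction m, hm using Nat.le_induction with
      | base => simp
      | succ m hm ih =>
        have h1 := hrec m
        have h2 := hbig m hm
        have hαm := hαmem m
        have hAs : A (m+1) = A m + α m := by simp [hA, Finset.sum_range_succ]
        have hss : s (m+1) = s m + β m := by simp [hs, Finset.sum_range_succ]
        have h3 : u (m+1) ≤ u m - α m * (ε/2) + β m := by nlinarith [hαm.1, hαm.2]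
        rw [hAs, hss]
        nlinarith [hαm.1]
    -- A m → ∞ gives a contradiction with u m ≥ -B
    obtain ⟨m, hmN, hmA⟩ : ∃ m, N ≤ m ∧ A N + ((u N + B + ε/2) / (ε/2) + 1) < A m := by
      have h1 := hAdiv.eventually_gt_atTop (A N + ((u N + B + ε/2) / (ε/2) + 1))
      obtain ⟨m, hm1, hm2⟩ := (h1.and (Filter.eventually_ge_atTop N)).exists
      exact ⟨m, hm2, hm1⟩
    have h4 := key m hmN
    have h5 := hlb m
    have h6 := htail N m le_rfl hmN
    have h7 : s m - s N < ε / 2 := by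
      have := htail N m le_rfl hmN
      rwa [Finset.sum_Ico_eq_sub _ hmN] at this
    have h8 : ε/2 * (A m - A N) ≤ u N + B + ε/2 := by linarith
    have h9 : A m - A N ≤ (u N + B + ε/2) / (ε/2) := by
      rw [le_div_iff₀ (by linarith : (0:ℝ) < ε/2)]; linarith
    linarith
  -- Step B : from K on, u stays ≤ ε
  refine ⟨K, fun m hm => ?_⟩
  have key : ∀ m, K ≤ m → u m ≤ ε / 2 + (s m - s K) := by
    intro m hm
    induction m, hm using Nat.le_induction with
    | base => simpa using hKu
    | succ m hm ih =>
      have h1 := hrec m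
      have hαm := hαmem m
      have hss : s (m+1) = s m + β m := by simp [hs, Finset.sum_range_succ]
      have hsKm : s K ≤ s m := hsmono hm
      rcases le_or_gt (u m) 0 with h | h
      · have : (1 - α m) * u m ≤ 0 := mul_nonpos_of_nonneg_of_nonpos (by linarith [hαm.2]) h
        rw [hss]; linarith
      · have : (1 - α m) * u m ≤ u m := by nlinarith [hαm.1]
        rw [hss]; linarith
  have h1 := key m hm
  have h2 : s m - s K < ε / 2 := by
    have := htail K m hKN hm
    rwa [Finset.sum_Ico_eq_sub _ hm] at this
  linarith


/-- Theorem 2.3 (nonaccumulation under a δ-oracle, convex case): with step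
sizes satisfying `Σ ᾱ_k = ∞` and `Σ ᾱ_k² < ∞`, Frank–Wolfe with a δ-oracle
satisfies `limsup_k (f(x_k) - f*) ≤ 2δ`. -/
theorem frankWolfe_delta_oracle_nonaccumulation {d : ℕ}
    (Q : Set (EuclideanSpace ℝ (Fin d)))
    (hQne : Q.Nonempty) (hQcomp : IsCompact Q) (hQconv : Convex ℝ Q)
    (f : EuclideanSpace ℝ (Fin d) → ℝ) (L δ : ℝ) (hδ : 0 ≤ δ)
    (hconv : ConvexOn ℝ Q f)
    (hdiff : ∀ x ∈ Q, DifferentiableAt ℝ f x)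
    (hLip : ∀ x ∈ Q, ∀ y ∈ Q, ‖gradient f x - gradient f y‖ ≤ L * ‖x - y‖)
    (x xt g : ℕ → EuclideanSpace ℝ (Fin d)) (α : ℕ → ℝ)
    (hα : ∀ k, α k ∈ Set.Ico (0 : ℝ) 1)
    (hdiv : ¬ Summable α)
    (hsq : Summable (fun k => (α k) ^ 2))
    (hx0 : x 0 ∈ Q)
    (horacle : ∀ k, ∀ y ∈ Q, |⟪g k - gradient f (x k), x k - y⟫| ≤ δ)
    (hxtQ : ∀ k, xt k ∈ Q)
    (hmin : ∀ k, ∀ y ∈ Q, ⟪g k, xt k - x k⟫ ≤ ⟪g k, y - x k⟫)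
    (hupd : ∀ k, x (k + 1) = x k + α k • (xt k - x k)) :
    Filter.limsup (fun k => f (x k) - sInf (f '' Q)) Filter.atTop ≤ 2 * δ := by
  classical
  have hxQ : ∀ k, x k ∈ Q := by
    intro k
    induction k with
    | zero => exact hx0
    | succ k ih =>
      rw [hupd k]
      exact hQconv.add_smul_sub_mem ih (hxtQ k) ⟨(hα k).1, le_of_lt (hα k).2⟩
  have hfc : ContinuousOn f Q := fun p hp => ((hdiff p hp).continuousAt).continuousWithinAt
  obtain ⟨xs, hxsQ, hxsmin⟩ := hQcomp.exists_isMinOn hQne hfc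
  have hxsmin' : ∀ z ∈ Q, f xs ≤ f z := fun z hz => hxsmin hz
  have hfstar : sInf (f '' Q) = f xs := by
    apply IsLeast.csInf_eq
    exact ⟨⟨xs, hxsQ, rfl⟩, by rintro _ ⟨z, hz, rfl⟩; exact hxsmin' z hz⟩
  set D := Metric.diam Q with hD
  have hDb : ∀ a ∈ Q, ∀ b ∈ Q, ‖a - b‖ ≤ D := fun a ha b hb => by
    rw [← dist_eq_norm]; exact Metric.dist_le_diam_of_mem hQcomp.isBounded ha hb
  set C := max L 0 * D ^ 2 / 2 with hC
  have hmaxL : (0:ℝ) ≤ max L 0 := le_max_right _ _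
  have hC0 : 0 ≤ C := by positivity
  set u : ℕ → ℝ := fun k => f (x k) - f xs - 2 * δ with hu
  have hlb : ∀ k, -(2*δ) ≤ u k := fun k => by
    have := hxsmin' _ (hxQ k); simp only [hu]; linarith
  have hrec : ∀ k, u (k+1) ≤ (1 - α k) * u k + C * α k ^ 2 := by
    intro k
    have hxk := hxQ k
    have hxk1 := hxQ (k+1)
    have hxtk := hxtQ k
    have hdesc := fw_descent hQconv hdiff hLip hxk hxk1
    have hdiffxk := hdiff _ hxk
    have hdx : x (k+1) - x k = α k • (xt k - x k) := by rw [hupd k]; abel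
    rw [hdx] at hdesc
    have hinn : ⟪gradient f (x k), α k • (xt k - x k)⟫ = α k * ⟪gradient f (x k), xt k - x k⟫ :=
      real_inner_smul_right _ _ _
    have hnorm : ‖α k • (xt k - x k)‖ ^ 2 = α k ^ 2 * ‖xt k - x k‖ ^ 2 := by
      rw [norm_smul, Real.norm_eq_abs, abs_of_nonneg (hα k).1, mul_pow]
    rw [hinn, hnorm] at hdesc
    have hwD : ‖xt k - x k‖ ≤ D := hDb _ hxtk _ hxk
    have hquad : L / 2 * (α k ^ 2 * ‖xt k - x k‖ ^ 2) ≤ C * α k ^ 2 := by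
      rcases le_or_gt L 0 with hL | hL
      · have h1 : max L 0 = 0 := max_eq_right hL
        have h2 : L / 2 * (α k ^ 2 * ‖xt k - x k‖ ^ 2) ≤ 0 :=
          mul_nonpos_of_nonpos_of_nonneg (by linarith) (by positivity)
        rw [hC, h1]
        simpa using h2
      · have h1 : max L 0 = L := max_eq_left hL.le
        have h2 : ‖xt k - x k‖ ^ 2 ≤ D ^ 2 := by nlinarith [norm_nonneg (xt k - x k)]
        rw [hC, h1]
        nlinarith [mul_nonneg (mul_nonneg hL.le (sq_nonneg (α k))) (sub_nonneg.2 h2)]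
    have hor1 := (abs_le.1 (horacle k (xt k) hxtk)).2
    have hor2 := (abs_le.1 (horacle k xs hxsQ)).1
    have hmin' := hmin k xs hxsQ
    have hgrad := fw_grad_convex_le hconv hxk hxsQ hdiffxk
    have hlin : ⟪gradient f (x k), xt k - x k⟫ ≤ f xs - f (x k) + 2 * δ := by
      simp only [inner_sub_left, inner_sub_right] at hor1 hor2 hmin' hgrad ⊢
      linarith
    have hα0 := (hα k).1
    have hmain : f (x (k+1)) ≤ f (x k) + α k * (f xs - f (x k) + 2*δ) + C * α k ^ 2 := by
      have := mul_le_mul_of_nonneg_left hlin hα0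
      linarith
    simp only [hu]
    nlinarith
  have hsmall := fw_seq_small u α (fun k => C * α k ^ 2) (2*δ) hα
    (fun k => by positivity) (hsq.mul_left C) hdiv hlb hrec
  rw [hfstar]
  have hco : Filter.IsCoboundedUnder (· ≤ ·) Filter.atTop (fun k => f (x k) - f xs) :=
    Filter.isCoboundedUnder_le_of_le Filter.atTop (x := 0)
      (fun k => sub_nonneg.2 (hxsmin' _ (hxQ k)))
  by_contra hcon
  push_neg at hcon
  set r := Filter.limsup (fun k => f (x k) - f xs) Filter.atTop with hr
  obtain ⟨K, hK⟩ := hsmall ((r - 2*δ)/2) (by linarith)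
  have hle : r ≤ 2*δ + (r - 2*δ)/2 := by
    apply Filter.limsup_le_of_le hco
    filter_upwards [Filter.eventually_ge_atTop K] with m hm
    have := hK m hm
    simp only [hu] at this
    linarith
  linarith
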